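/- Let V be an N-dimensional real inner product space continuously embedded in a normed space F with norm ‖·‖, and suppose the inner product on V has the form (u, v) = ∑_{i=1}^M w_i T_i(u) T_i(v), where w_i > 0 with ∑ w_i = 1 and each T_i is a linear functional on F with |T_i(f)| ≤ ‖f‖ for all f. Let P : F → V be the orthogonal projection in this inner product (defined on all of F via the bilinear extension). Then for any orthonormal basis {η₁,…,η_N} of V, the operator norm of P with respect to ‖·‖ satisfies ‖P‖ ≤ sup_{‖T‖≤1} (∑_{h=1}^N |T(η_h)|²)^{1/2}, where the sup is over linear functionals T on F of norm at most 1. -/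
import Mathlib


open Finset

/-- `ℓ²`-type estimate of the norm of a discrete least squares projector.
Let `V ⊆ F` be an `N`-dimensional subspace of a normed space carrying the discrete
inner product `(u,v) = ∑ᵢ wᵢ Tᵢ(u) Tᵢ(v)` with positive normalized weights
(`∑ wᵢ = 1`) and sampling functionals `|Tᵢ(f)| ≤ ‖f‖`. If `η₁,…,η_N` is a basis
of `V` orthonormal with respect to this inner product, the orthogonal projection
`P f = ∑_h (f, η_h) η_h` satisfies
`‖P f‖ ≤ (sup_{‖T‖ ≤ 1} √(∑_h T(η_h)²)) ‖f‖` for every `f ∈ F`. -/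
theorem least_squares_norm_le_M2
    {F : Type*} [NormedAddCommGroup F] [NormedSpace ℝ F] (N M : ℕ)
    (V : Submodule ℝ F) (hdim : Module.finrank ℝ V = N)
    (T : Fin M → F →ₗ[ℝ] ℝ) (hT : ∀ i (f : F), |T i f| ≤ ‖f‖)
    (w : Fin M → ℝ) (hw : ∀ i, 0 < w i) (hw1 : ∑ i, w i = 1)
    (η : Fin N → F) (hηV : ∀ h, η h ∈ V)
    (hspan : Submodule.span ℝ (Set.range η) = V)
    (hON : ∀ a b : Fin N,
      (∑ i, w i * T i (η a) * T i (η b)) = if a = b then 1 else 0) :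
    ∀ f : F,
      ‖∑ h, (∑ i, w i * T i f * T i (η h)) • η h‖ ≤
        sSup {r : ℝ | ∃ T' : F →L[ℝ] ℝ, ‖T'‖ ≤ 1 ∧
            r = Real.sqrt (∑ h, (T' (η h)) ^ 2)} * ‖f‖ := by
  intro f
  set c : Fin N → ℝ := fun h => ∑ i, w i * T i f * T i (η h) with hc
  set Sset : Set ℝ := {r : ℝ | ∃ T' : F →L[ℝ] ℝ, ‖T'‖ ≤ 1 ∧
      r = Real.sqrt (∑ h, (T' (η h)) ^ 2)} with hSset
  -- `Sset` is bounded above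
  have hbdd : BddAbove Sset := by
    refine ⟨Real.sqrt (∑ h, ‖η h‖ ^ 2), ?_⟩
    rintro r ⟨T', hT'1, rfl⟩
    refine Real.sqrt_le_sqrt (Finset.sum_le_sum fun h _ => ?_)
    have h1 : |T' (η h)| ≤ ‖η h‖ := by
      calc |T' (η h)| ≤ ‖T'‖ * ‖η h‖ := T'.le_opNorm _
        _ ≤ 1 * ‖η h‖ := by gcongr
        _ = ‖η h‖ := one_mul _
    calc (T' (η h)) ^ 2 = |T' (η h)| ^ 2 := (sq_abs _).symm
      _ ≤ ‖η h‖ ^ 2 := by gcongr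
  -- `Sset` nonempty and sSup nonneg
  have hmem0 : (0 : ℝ) ∈ Sset := ⟨0, by simp⟩
  have hSnonneg : 0 ≤ sSup Sset := le_csSup hbdd hmem0
  -- Mixed-term computation
  have hAB : ∑ i, w i * T i f * (∑ h, c h * T i (η h)) = ∑ h, (c h) ^ 2 := by
    simp_rw [Finset.mul_sum]
    rw [Finset.sum_comm]
    refine Finset.sum_congr rfl fun h _ => ?_
    calc ∑ i, w i * T i f * (c h * T i (η h))
        = c h * ∑ i, w i * T i f * T i (η h) := by
          rw [Finset.mul_sum]; exact Finset.sum_congr rfl fun i _ => by ring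
      _ = (c h) ^ 2 := by rw [sq]
  -- Quadratic-term computation
  have hBB : ∑ i, w i * (∑ h, c h * T i (η h)) ^ 2 = ∑ h, (c h) ^ 2 := by
    have step : ∀ i, w i * (∑ h, c h * T i (η h)) ^ 2
        = ∑ h, ∑ k, c h * c k * (w i * T i (η h) * T i (η k)) := by
      intro i
      rw [sq, Finset.sum_mul_sum, Finset.mul_sum]
      refine Finset.sum_congr rfl fun h _ => ?_
      rw [Finset.mul_sum]
      exact Finset.sum_congr rfl fun k _ => by ring
    simp_rw [step]
    rw [Finset.sum_comm]
    have step2 : ∀ h, ∑ i, ∑ k, c h * c k * (w i * T i (η h) * T i (η k))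
        = (c h) ^ 2 := by
      intro h
      rw [Finset.sum_comm]
      have : ∀ k, ∑ i, c h * c k * (w i * T i (η h) * T i (η k))
          = c h * c k * (if h = k then 1 else 0) := by
        intro k
        rw [← Finset.mul_sum, hON]
      simp_rw [this]
      simp [sq]
    exact Finset.sum_congr rfl fun h _ => step2 h
  -- Bessel inequality
  have hbessel : ∑ h, (c h) ^ 2 ≤ ∑ i, w i * (T i f) ^ 2 := by
    have hnn : 0 ≤ ∑ i, w i * (T i f - ∑ h, c h * T i (η h)) ^ 2 :=
      Finset.sum_nonneg fun i _ => mul_nonneg (hw i).le (sq_nonneg _)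
    have hexp : ∑ i, w i * (T i f - ∑ h, c h * T i (η h)) ^ 2
        = ∑ i, w i * (T i f) ^ 2 - ∑ h, (c h) ^ 2 := by
      have : ∀ i, w i * (T i f - ∑ h, c h * T i (η h)) ^ 2
          = w i * (T i f) ^ 2 - 2 * (w i * T i f * (∑ h, c h * T i (η h)))
            + w i * (∑ h, c h * T i (η h)) ^ 2 := by intro i; ring
      simp_rw [this]
      rw [Finset.sum_add_distrib, Finset.sum_sub_distrib, hBB, ← Finset.mul_sum, hAB]
      ring
    linarith [hexp ▸ hnn]
  -- Stability: discrete norm of f bounded by ‖f‖²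
  have hff : ∑ i, w i * (T i f) ^ 2 ≤ ‖f‖ ^ 2 := by
    calc ∑ i, w i * (T i f) ^ 2 ≤ ∑ i, w i * ‖f‖ ^ 2 := by
          refine Finset.sum_le_sum fun i _ => ?_
          have := hT i f
          have h2 : (T i f) ^ 2 ≤ ‖f‖ ^ 2 := by
            rw [← sq_abs]
            gcongr
          exact mul_le_mul_of_nonneg_left h2 (hw i).le
      _ = ‖f‖ ^ 2 := by rw [← Finset.sum_mul, hw1, one_mul]
  have hcnorm : Real.sqrt (∑ h, (c h) ^ 2) ≤ ‖f‖ := by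
    calc Real.sqrt (∑ h, (c h) ^ 2) ≤ Real.sqrt (‖f‖ ^ 2) :=
          Real.sqrt_le_sqrt (hbessel.trans hff)
      _ = ‖f‖ := Real.sqrt_sq (norm_nonneg f)
  -- Main estimate via a dual vector
  set P : F := ∑ h, c h • η h with hP
  rcases exists_dual_vector'' ℝ P with ⟨g, hg1, hgP⟩
  have hgP' : g P = ‖P‖ := by exact_mod_cast hgP
  have hexpand : g P = ∑ h, c h * g (η h) := by
    rw [hP, map_sum]
    exact Finset.sum_congr rfl fun h _ => by simp
  have hCS : ∑ h, c h * g (η h)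
      ≤ Real.sqrt (∑ h, (c h) ^ 2) * Real.sqrt (∑ h, (g (η h)) ^ 2) :=
    Real.sum_mul_le_sqrt_mul_sqrt _ _ _
  have hmem : Real.sqrt (∑ h, (g (η h)) ^ 2) ∈ Sset := ⟨g, hg1, rfl⟩
  have hle : Real.sqrt (∑ h, (g (η h)) ^ 2) ≤ sSup Sset := le_csSup hbdd hmem
  calc ‖P‖ = ∑ h, c h * g (η h) := by rw [← hgP', hexpand]
    _ ≤ Real.sqrt (∑ h, (c h) ^ 2) * Real.sqrt (∑ h, (g (η h)) ^ 2) := hCS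
    _ ≤ ‖f‖ * sSup Sset := by
        exact mul_le_mul hcnorm hle (Real.sqrt_nonneg _) (norm_nonneg f)
    _ = sSup Sset * ‖f‖ := mul_comm _ _
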